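/- There exists a computable history-independent martingale with increments {1/n} (betting 1/n at step n, always on +1, with suitable initial capital) that separates (ℝ, ∞-gains) from (V, ∞-gains): for any countable set of nonnegative V-supermartingales {S_j}, there exists a binary sequence x on which this martingale tends to infinity without going bankrupt, while limsup_n S_j(x↾n) < ∞ for every j. -/

import Mathlib

open Filter

noncomputable section

/-- The length-`n` prefix of an infinite binary sequence (`true` = +1, `false` = -1). -/
def pre (x : ℕ → Bool) (n : ℕ) : List Bool := (List.range n).map x

/-- The increment (wager) of `M` at `σ`: `M'(σ) = (M(σ,+1) - M(σ,-1))/2`. -/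
def inc (M : List Bool → ℝ) (σ : List Bool) : ℝ :=
  (M (σ ++ [true]) - M (σ ++ [false])) / 2

/-- The marginal consumption of `M` at `σ`. -/
def marginal (M : List Bool → ℝ) (σ : List Bool) : ℝ :=
  M σ - (M (σ ++ [false]) + M (σ ++ [true])) / 2

def IsSupermartingale (M : List Bool → ℝ) : Prop :=
  ∀ σ, (M (σ ++ [false]) + M (σ ++ [true])) / 2 ≤ M σ

def IsMartingale (M : List Bool → ℝ) : Prop :=
  ∀ σ, M σ = (M (σ ++ [false]) + M (σ ++ [true])) / 2

/-- The proper cover of `M`: the martingale with the same initial capital and increments. -/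
def cover (M : List Bool → ℝ) (σ : List Bool) : ℝ :=
  M [] + ∑ k ∈ Finset.range σ.length,
    (if σ.getD k false then inc M (σ.take k) else - inc M (σ.take k))

/-- `M` goes bankrupt at `σ`. -/
def Bankrupts (M : List Bool → ℝ) (σ : List Bool) : Prop :=
  M σ - |inc M σ| < marginal M σ

/-- `M` goes bankrupt on `x`. -/
def BankruptOn (M : List Bool → ℝ) (x : ℕ → Bool) : Prop :=
  ∃ n, Bankrupts M (pre x n)

/-- `M` achieves ∞-gains on `x`. -/
def AchievesGains (M : List Bool → ℝ) (x : ℕ → Bool) : Prop :=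
  ¬ BankruptOn M x ∧ Tendsto (fun n => M (pre x n)) atTop atTop

/-- `M` achieves ∞-consumption on `x`. -/
def AchievesConsumption (M : List Bool → ℝ) (x : ℕ → Bool) : Prop :=
  ¬ BankruptOn M x ∧ Tendsto (fun n => cover M (pre x n) - M (pre x n)) atTop atTop

/-- `M` achieves oscillation on `x`. -/
def AchievesOscillation (M : List Bool → ℝ) (x : ℕ → Bool) : Prop :=
  ¬ BankruptOn M x ∧
    liminf (fun n => ((cover M (pre x n) : ℝ) : EReal)) atTop ≠
      limsup (fun n => ((cover M (pre x n) : ℝ) : EReal)) atTop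

/-- An `A`-(super)martingale: all wagers lie in `A`. -/
def WagersIn (M : List Bool → ℝ) (A : Set ℝ) : Prop := ∀ σ, inc M σ ∈ A

/-- History independence: the wager depends only on the length of the history. -/
def HistoryIndependent (M : List Bool → ℝ) : Prop :=
  ∀ σ τ : List Bool, σ.length = τ.length → inc M σ = inc M τ

/-- The wager set `V = {a : |a| ≥ 1} ∪ {0}`. -/
def Vset : Set ℝ := {a : ℝ | 1 ≤ |a|} ∪ {0}

open scoped Classical

namespace G13

/-! ### list helpers -/

lemma pre_length (x : ℕ → Bool) (n : ℕ) : (pre x n).length = n := by simp [pre]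

lemma pre_succ (x : ℕ → Bool) (n : ℕ) : pre x (n+1) = pre x n ++ [x n] := by
  simp [pre, List.range_succ]

lemma pre_getD (x : ℕ → Bool) {n k : ℕ} (h : k < n) : (pre x n).getD k false = x k := by
  rw [pre, List.getD_eq_getElem _ _ (by simpa using h)]; simp

lemma pre_take (x : ℕ → Bool) {n k : ℕ} (h : k ≤ n) : (pre x n).take k = pre x k := by
  simp only [pre]
  rw [← List.map_take, List.take_range, Nat.min_eq_left h]

lemma take_concat {α : Type*} (l : List α) (b : α) {k : ℕ} (h : k ≤ l.length) :
    (l ++ [b]).take k = l.take k :=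
  List.take_append_of_le_length h

lemma take_concat_self {α : Type*} (l : List α) (b : α) :
    (l ++ [b]).take l.length = l := by
  rw [take_concat l b le_rfl, List.take_length]

lemma getD_concat {l : List Bool} {b : Bool} {k : ℕ} (h : k < l.length) :
    (l ++ [b]).getD k false = l.getD k false := by
  rw [List.getD_eq_getElem _ _ (by simp; omega), List.getD_eq_getElem _ _ h,
    List.getElem_append_left h]

lemma getD_concat_self (l : List Bool) (b : Bool) : (l ++ [b]).getD l.length false = b := by
  rw [List.getD_eq_getElem _ _ (by simp)]; simp

/-! ### children formulas -/

lemma child_true (f : List Bool → ℝ) (σ : List Bool) :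
    f (σ ++ [true]) = f σ - marginal f σ + inc f σ := by
  simp only [marginal, inc]; ring

lemma child_false (f : List Bool → ℝ) (σ : List Bool) :
    f (σ ++ [false]) = f σ - marginal f σ - inc f σ := by
  simp only [marginal, inc]; ring

lemma avg_children (f : List Bool → ℝ) (σ : List Bool) :
    (f (σ ++ [false]) + f (σ ++ [true])) / 2 = f σ - marginal f σ := by
  simp only [marginal]; ring

lemma marginal_nonneg {S : List Bool → ℝ} (hS : IsSupermartingale S) (σ : List Bool) :
    0 ≤ marginal S σ := by
  have := hS σ; simp only [marginal]; linarith

lemma child_le_twice {S : List Bool → ℝ} (hS : IsSupermartingale S)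
    (hpos : ∀ σ, 0 ≤ S σ) (σ : List Bool) (b : Bool) : S (σ ++ [b]) ≤ 2 * S σ := by
  have h := hS σ
  have h0 := hpos (σ ++ [false]); have h1 := hpos (σ ++ [true])
  cases b <;> linarith

lemma double_bound {S : List Bool → ℝ} (hS : IsSupermartingale S)
    (hpos : ∀ σ, 0 ≤ S σ) : ∀ (n : ℕ) (σ : List Bool), σ.length = n →
    S σ ≤ 2 ^ n * (S [] + 1) := by
  intro n
  induction n with
  | zero =>
    intro σ h
    have : σ = [] := List.eq_nil_of_length_eq_zero h
    subst this
    simp only [pow_zero, one_mul]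
    linarith [hpos ([] : List Bool)]
  | succ n ih =>
    intro σ h
    rcases List.eq_nil_or_concat σ with rfl | ⟨τ, b, rfl⟩
    · simp at h
    · simp only [List.concat_eq_append] at h ⊢
      have hl : τ.length = n := by simpa using h
      have h1 := child_le_twice hS hpos τ b
      have h2 := ih τ hl
      have h3 : (0:ℝ) < 2 ^ n := by positivity
      calc S (τ ++ [b]) ≤ 2 * S τ := h1
        _ ≤ 2 * (2 ^ n * (S [] + 1)) := by linarith
        _ = 2 ^ (n+1) * (S [] + 1) := by ring

/-! ### The tree expectation operator -/

noncomputable def Tstep (c : List Bool → Prop) (f : List Bool → ℝ) (σ : List Bool) : ℝ :=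
  if c σ then (f (σ ++ [false]) + f (σ ++ [true])) / 2 else f (σ ++ [true])

noncomputable def En (c : List Bool → Prop) : ℕ → (List Bool → ℝ) → ℝ
  | 0, f => f []
  | n+1, f => En c n (Tstep c f)

lemma En_mono (c : List Bool → Prop) :
    ∀ (n : ℕ) {f g : List Bool → ℝ}, (∀ σ : List Bool, σ.length = n → f σ ≤ g σ) →
    En c n f ≤ En c n g := by
  intro n
  induction n with
  | zero => intro f g h; exact h [] rfl
  | succ n ih =>
    intro f g h
    refine ih (fun σ hσ => ?_)
    unfold Tstep
    split
    · have h0 := h (σ ++ [false]) (by simp [hσ])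
      have h1 := h (σ ++ [true]) (by simp [hσ])
      linarith
    · exact h _ (by simp [hσ])

lemma En_congr (c : List Bool → Prop) (n : ℕ) {f g : List Bool → ℝ}
    (h : ∀ σ : List Bool, σ.length = n → f σ = g σ) : En c n f = En c n g :=
  le_antisymm (En_mono c n (fun σ hσ => (h σ hσ).le)) (En_mono c n (fun σ hσ => (h σ hσ).ge))

lemma En_const (c : List Bool → Prop) (a : ℝ) : ∀ n, En c n (fun _ => a) = a := by
  intro n
  induction n with
  | zero => rfl
  | succ n ih =>
    show En c n (Tstep c (fun _ => a)) = a
    have : Tstep c (fun _ => a) = fun _ => a := by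
      funext σ; unfold Tstep; split <;> ring
    rw [this, ih]

lemma En_add (c : List Bool → Prop) : ∀ (n : ℕ) (f g : List Bool → ℝ),
    En c n (fun σ => f σ + g σ) = En c n f + En c n g := by
  intro n
  induction n with
  | zero => intro f g; rfl
  | succ n ih =>
    intro f g
    show En c n (Tstep c fun σ => f σ + g σ) = En c n (Tstep c f) + En c n (Tstep c g)
    rw [← ih]
    refine En_congr c n (fun σ _ => ?_)
    unfold Tstep; split <;> ring

lemma En_smul (c : List Bool → Prop) : ∀ (n : ℕ) (a : ℝ) (f : List Bool → ℝ),
    En c n (fun σ => a * f σ) = a * En c n f := by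
  intro n
  induction n with
  | zero => intro a f; rfl
  | succ n ih =>
    intro a f
    show En c n (Tstep c fun σ => a * f σ) = a * En c n (Tstep c f)
    rw [← ih]
    refine En_congr c n (fun σ _ => ?_)
    unfold Tstep; split <;> ring

lemma En_sub (c : List Bool → Prop) (n : ℕ) (f g : List Bool → ℝ) :
    En c n (fun σ => f σ - g σ) = En c n f - En c n g := by
  have h1 : En c n (fun σ => f σ + (-1) * g σ) = En c n f + En c n (fun σ => (-1:ℝ) * g σ) := by
    simpa using En_add c n f (fun σ => (-1) * g σ)
  have h2 : En c n (fun σ => (-1:ℝ) * g σ) = -1 * En c n g := En_smul c n (-1) g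
  have h3 : En c n (fun σ => f σ - g σ) = En c n (fun σ => f σ + (-1) * g σ) := by
    refine En_congr c n (fun σ _ => by ring)
  rw [h3, h1, h2]; ring

lemma En_le_of_tstep (c : List Bool → Prop) {g : List Bool → ℝ} {m : ℕ}
    (hg : ∀ σ : List Bool, m ≤ σ.length → Tstep c g σ ≤ g σ) :
    ∀ n, m ≤ n → En c n g ≤ En c m g := by
  intro n
  induction n with
  | zero => intro h; have : m = 0 := Nat.le_zero.mp h; simp [this]
  | succ n ih =>
    intro h
    rcases Nat.lt_or_ge n.succ m with h' | h'
    · omega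
    rcases eq_or_lt_of_le h with rfl | hlt
    · rfl
    have hmn : m ≤ n := by omega
    calc En c (n+1) g = En c n (Tstep c g) := rfl
      _ ≤ En c n g := En_mono c n (fun σ hσ => hg σ (by omega))
      _ ≤ En c m g := ih hmn

inductive Reach (c : List Bool → Prop) : List Bool → Prop
  | nil : Reach c []
  | coin (σ : List Bool) (b : Bool) : Reach c σ → c σ → Reach c (σ ++ [b])
  | det (σ : List Bool) : Reach c σ → ¬ c σ → Reach c (σ ++ [true])

lemma En_pos_exists (c : List Bool → Prop) :
    ∀ (n : ℕ) (h : List Bool → ℝ), 0 < En c n h →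
    ∃ σ, Reach c σ ∧ σ.length = n ∧ 0 < h σ := by
  intro n
  induction n with
  | zero => intro h hp; exact ⟨[], Reach.nil, rfl, hp⟩
  | succ n ih =>
    intro h hp
    obtain ⟨σ, hr, hl, hpos⟩ := ih (Tstep c h) hp
    by_cases hc : c σ
    · rw [Tstep, if_pos hc] at hpos
      rcases lt_or_ge 0 (h (σ ++ [false])) with h0 | h0
      · exact ⟨σ ++ [false], Reach.coin σ false hr hc, by simp [hl], h0⟩
      · refine ⟨σ ++ [true], Reach.coin σ true hr hc, by simp [hl], by linarith⟩
    · rw [Tstep, if_neg hc] at hpos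
      exact ⟨σ ++ [true], Reach.det σ hr hc, by simp [hl], hpos⟩

lemma Reach.take {c : List Bool → Prop} : ∀ {σ : List Bool}, Reach c σ →
    ∀ k, Reach c (σ.take k) := by
  intro σ h
  induction h with
  | nil => intro k; simp; exact Reach.nil
  | coin σ b hr hc ih =>
    intro k
    rcases le_or_gt k σ.length with hk | hk
    · rw [take_concat σ b hk]; exact ih k
    · rw [List.take_of_length_le (by simp; omega)]; exact Reach.coin σ b hr hc
  | det σ hr hc ih =>
    intro k
    rcases le_or_gt k σ.length with hk | hk
    · rw [take_concat σ true hk]; exact ih k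
    · rw [List.take_of_length_le (by simp; omega)]; exact Reach.det σ hr hc

lemma Reach.getD_true {c : List Bool → Prop} : ∀ {σ : List Bool}, Reach c σ →
    ∀ k, k < σ.length → ¬ c (σ.take k) → σ.getD k false = true := by
  intro σ h
  induction h with
  | nil => intro k hk; simp at hk
  | coin σ b hr hc ih =>
    intro k hk hnc
    rcases lt_or_ge k σ.length with hk' | hk'
    · rw [getD_concat hk']
      exact ih k hk' (by rwa [take_concat σ b hk'.le] at hnc)
    · have hkeq : k = σ.length := by simp at hk; omega
      subst hkeq
      rw [take_concat_self] at hnc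
      exact absurd hc hnc
  | det σ hr hc ih =>
    intro k hk hnc
    rcases lt_or_ge k σ.length with hk' | hk'
    · rw [getD_concat hk']
      exact ih k hk' (by rwa [take_concat σ true hk'.le] at hnc)
    · have hkeq : k = σ.length := by simp at hk; omega
      subst hkeq
      exact getD_concat_self σ true

/-! ### Dead / Ville -/

def Dead (F : List Bool → ℝ) (m : ℕ) (lam : ℝ) (σ : List Bool) : Prop :=
  ∃ k, m ≤ k ∧ k ≤ σ.length ∧ lam < F (σ.take k)

lemma dead_concat {F m lam} {σ : List Bool} {b : Bool} (h : Dead F m lam σ) :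
    Dead F m lam (σ ++ [b]) := by
  obtain ⟨k, h1, h2, h3⟩ := h
  exact ⟨k, h1, by simp; omega, by rwa [take_concat σ b h2]⟩

lemma not_dead_take {F m lam} {σ : List Bool} (h : ¬ Dead F m lam σ) (K : ℕ) :
    ¬ Dead F m lam (σ.take K) := by
  intro ⟨k, h1, h2, h3⟩
  have hkK : k ≤ K := le_trans h2 (by simp)
  have hkl : k ≤ σ.length := le_trans h2 (by simp)
  rw [List.take_take, Nat.min_eq_left hkK] at h3
  exact h ⟨k, h1, hkl, h3⟩

lemma dead_of_concat {F m lam} {σ : List Bool} {b : Bool}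
    (h : Dead F m lam (σ ++ [b])) (h2 : ¬ Dead F m lam σ) : lam < F (σ ++ [b]) := by
  obtain ⟨k, hk1, hk2, hk3⟩ := h
  rcases le_or_gt k σ.length with hk | hk
  · exact absurd ⟨k, hk1, hk, by rwa [take_concat σ b hk] at hk3⟩ h2
  · have : k = σ.length + 1 := by simp at hk2; omega
    subst this
    rwa [List.take_of_length_le (by simp)] at hk3

lemma not_dead_self {F m lam} {σ : List Bool} (h : ¬ Dead F m lam σ)
    (hm : m ≤ σ.length) : F σ ≤ lam := by
  by_contra hc
  exact h ⟨σ.length, hm, le_rfl, by rw [List.take_length]; linarith⟩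

lemma ville (c : List Bool → Prop) (F : List Bool → ℝ) (m : ℕ) (lam : ℝ)
    (hF0 : ∀ σ, 0 ≤ F σ) (hlam : 0 < lam)
    (hsuper : ∀ σ : List Bool, m ≤ σ.length → Tstep c F σ ≤ F σ)
    (d : ℝ) (hd : ∀ σ : List Bool, σ.length = m → F σ ≤ d) (hdlam : d ≤ lam) :
    ∀ n, m ≤ n → En c n (fun σ => if Dead F m lam σ then (1:ℝ) else 0) ≤ d / lam := by
  set φ : List Bool → ℝ := fun σ => if Dead F m lam σ then 1 else min (F σ / lam) 1 with hφ
  have hφ_child : ∀ (σ : List Bool) (b : Bool), ¬ Dead F m lam σ →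
      φ (σ ++ [b]) ≤ F (σ ++ [b]) / lam := by
    intro σ b hnd
    by_cases hdb : Dead F m lam (σ ++ [b])
    · have := dead_of_concat hdb hnd
      simp only [hφ, if_pos hdb]
      rw [le_div_iff₀ hlam]; linarith
    · simp only [hφ, if_neg hdb]
      exact min_le_left _ _
  have hstep : ∀ σ : List Bool, m ≤ σ.length → Tstep c φ σ ≤ φ σ := by
    intro σ hm
    by_cases hdσ : Dead F m lam σ
    · have hf := dead_concat (b := false) hdσ
      have ht := dead_concat (b := true) hdσ
      unfold Tstep
      simp only [hφ, if_pos hdσ, if_pos hf, if_pos ht]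
      split <;> norm_num
    · have hvlam : F σ ≤ lam := not_dead_self hdσ hm
      have hφσ : φ σ = F σ / lam := by
        simp only [hφ, if_neg hdσ]
        exact min_eq_left (by rw [div_le_one hlam]; exact hvlam)
      have hcf := hφ_child σ false hdσ
      have hct := hφ_child σ true hdσ
      have hsup := hsuper σ hm
      rw [hφσ]
      unfold Tstep at hsup ⊢
      by_cases hc : c σ
      · rw [if_pos hc] at hsup ⊢
        have : (F (σ ++ [false]) / lam + F (σ ++ [true]) / lam) / 2 ≤ F σ / lam := by
          rw [← add_div, div_div]
          rw [div_le_div_iff₀ (by positivity) hlam]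
          nlinarith
        linarith
      · rw [if_neg hc] at hsup ⊢
        calc φ (σ ++ [true]) ≤ F (σ ++ [true]) / lam := hct
          _ ≤ F σ / lam := by gcongr
  intro n hn
  have h1 : En c n (fun σ => if Dead F m lam σ then (1:ℝ) else 0) ≤ En c n φ := by
    refine En_mono c n (fun σ _ => ?_)
    by_cases hdσ : Dead F m lam σ
    · simp [hφ, hdσ]
    · simp only [hφ, if_neg hdσ]
      have : (0:ℝ) ≤ min (F σ / lam) 1 := le_min (div_nonneg (hF0 σ) hlam.le) zero_le_one
      simpa using this
  have h2 : En c n φ ≤ En c m φ := En_le_of_tstep c hstep n hn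
  have h3 : En c m φ ≤ En c m (fun _ => d / lam) := by
    refine En_mono c m (fun σ hσ => ?_)
    have hnd : ¬ Dead F m lam σ := by
      intro ⟨k, hk1, hk2, hk3⟩
      rw [hσ] at hk2
      have : k = m := le_antisymm hk2 hk1
      subst this
      rw [← hσ, List.take_length] at hk3
      have := hd σ hσ
      linarith
    simp only [hφ, if_neg hnd]
    calc min (F σ / lam) 1 ≤ F σ / lam := min_le_left _ _
      _ ≤ d / lam := by gcongr; exact hd σ hσ
  rw [En_const] at h3
  linarith

/-! ### bet counting -/

noncomputable def cntF (F : List Bool → ℝ) (m : ℕ) (lam : ℝ) (σ : List Bool) : ℝ :=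
  ∑ k ∈ Finset.range σ.length,
    if (m ≤ k ∧ inc F (σ.take k) ≠ 0 ∧ ¬ Dead F m lam (σ.take k)) then (1:ℝ) else 0

lemma cntF_nonneg (F m lam) (σ : List Bool) : 0 ≤ cntF F m lam σ := by
  refine Finset.sum_nonneg (fun k _ => ?_)
  split <;> norm_num

lemma cntF_concat (F : List Bool → ℝ) (m : ℕ) (lam : ℝ) (σ : List Bool) (b : Bool) :
    cntF F m lam (σ ++ [b]) = cntF F m lam σ +
      (if (m ≤ σ.length ∧ inc F σ ≠ 0 ∧ ¬ Dead F m lam σ) then (1:ℝ) else 0) := by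
  unfold cntF
  have hlen : (σ ++ [b]).length = σ.length + 1 := by simp
  rw [hlen, Finset.sum_range_succ]
  congr 1
  · refine Finset.sum_congr rfl (fun k hk => ?_)
    have hk' : k ≤ σ.length := (Finset.mem_range.mp hk).le
    rw [take_concat σ b hk']
  · rw [take_concat_self]

lemma cntF_take (F : List Bool → ℝ) (m : ℕ) (lam : ℝ) (σ : List Bool) (K : ℕ) :
    cntF F m lam (σ.take K) ≤ cntF F m lam σ := by
  unfold cntF
  have hlen : (σ.take K).length = min K σ.length := by simp
  rw [hlen]
  have hsub : Finset.range (min K σ.length) ⊆ Finset.range σ.length :=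
    Finset.range_subset_range.mpr (min_le_right _ _)
  calc (∑ k ∈ Finset.range (min K σ.length),
        if (m ≤ k ∧ inc F ((σ.take K).take k) ≠ 0 ∧ ¬ Dead F m lam ((σ.take K).take k))
        then (1:ℝ) else 0)
      = ∑ k ∈ Finset.range (min K σ.length),
        (if (m ≤ k ∧ inc F (σ.take k) ≠ 0 ∧ ¬ Dead F m lam (σ.take k)) then (1:ℝ) else 0) := by
        refine Finset.sum_congr rfl (fun k hk => ?_)
        have hkK : k ≤ K := le_of_lt (lt_of_lt_of_le (Finset.mem_range.mp hk) (min_le_left _ _))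
        rw [List.take_take, Nat.min_eq_left hkK]
    _ ≤ _ := by
        refine Finset.sum_le_sum_of_subset_of_nonneg hsub (fun k _ _ => ?_)
        split <;> norm_num

noncomputable def psi (lam u : ℝ) : ℝ := 4*lam^2 + 4*lam*u - u^2

lemma count_bound (c : List Bool → Prop) (F : List Bool → ℝ) (m : ℕ) (lam : ℝ)
    (hF0 : ∀ σ, 0 ≤ F σ) (hlam : 0 < lam)
    (hmarg : ∀ σ, 0 ≤ marginal F σ)
    (hV : ∀ σ, inc F σ ≠ 0 → 1 ≤ |inc F σ|)
    (hnc : ∀ σ : List Bool, m ≤ σ.length → ¬ c σ → inc F σ = 0)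
    (d : ℝ) (hd : ∀ σ : List Bool, σ.length = m → F σ ≤ d) (h0d : 0 ≤ d) (hdlam : d ≤ lam) :
    ∀ n, m ≤ n → En c n (cntF F m lam) ≤ 4*lam^2 + 4*lam*d := by
  set chi : List Bool → ℝ := fun σ => if Dead F m lam σ then 0 else psi lam (F σ) with hchi
  have hchild2 : ∀ (σ : List Bool) (b : Bool), F (σ ++ [b]) ≤ 2 * F σ := by
    intro σ b
    have h0 := hF0 (σ ++ [false]); have h1 := hF0 (σ ++ [true])
    have hm := hmarg σ
    have hT := child_true F σ; have hF := child_false F σ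
    cases b <;> nlinarith
  -- step inequality
  have hstep : ∀ σ : List Bool, m ≤ σ.length →
      Tstep c (fun τ => cntF F m lam τ + chi τ) σ ≤ cntF F m lam σ + chi σ := by
    intro σ hm
    by_cases hdσ : Dead F m lam σ
    · have hcnt : ∀ b : Bool, cntF F m lam (σ ++ [b]) = cntF F m lam σ := by
        intro b; rw [cntF_concat]; simp [hdσ]
      have hchiC : ∀ b : Bool, chi (σ ++ [b]) = 0 := by
        intro b; simp [hchi, dead_concat hdσ]
      have hchiσ : chi σ = 0 := by simp [hchi, hdσ]
      unfold Tstep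
      split <;> simp only [hcnt, hchiC, hchiσ] <;> norm_num
    · have hvlam : F σ ≤ lam := not_dead_self hdσ hm
      have hv0 : 0 ≤ F σ := hF0 σ
      have hchi_child : ∀ b : Bool, chi (σ ++ [b]) ≤ psi lam (F (σ ++ [b])) := by
        intro b
        by_cases hdb : Dead F m lam (σ ++ [b])
        · simp only [hchi, if_pos hdb]
          have h2 := hchild2 σ b
          have h0 := hF0 (σ ++ [b])
          unfold psi; nlinarith
        · simp [hchi, hdb]
      have hcnt : ∀ b : Bool, cntF F m lam (σ ++ [b]) = cntF F m lam σ +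
          (if (m ≤ σ.length ∧ inc F σ ≠ 0 ∧ ¬ Dead F m lam σ) then (1:ℝ) else 0) := by
        intro b; rw [cntF_concat]
      have hchiσ : chi σ = psi lam (F σ) := by simp [hchi, hdσ]
      have hind : (if (m ≤ σ.length ∧ inc F σ ≠ 0 ∧ ¬ Dead F m lam σ) then (1:ℝ) else 0)
          ≤ (inc F σ)^2 := by
        split
        · rename_i hcond
          have h1 := hV σ hcond.2.1
          calc (1:ℝ) = 1^2 := by norm_num
            _ ≤ |inc F σ|^2 := by nlinarith
            _ = (inc F σ)^2 := sq_abs _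
        · positivity
      have hmg := hmarg σ
      have hT := child_true F σ; have hF := child_false F σ
      unfold Tstep
      by_cases hc : c σ
      · rw [if_pos hc]
        have hf := hchi_child false
        have ht := hchi_child true
        simp only [hcnt, hchiσ]
        have hpsi : (psi lam (F (σ ++ [false])) + psi lam (F (σ ++ [true]))) / 2
            = 4*lam^2 + 4*lam*(F σ - marginal F σ) - ((F σ - marginal F σ)^2 + (inc F σ)^2) := by
          rw [hT, hF]; unfold psi; ring
        have hkey : (if (m ≤ σ.length ∧ inc F σ ≠ 0 ∧ ¬ Dead F m lam σ) then (1:ℝ) else 0)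
            + (4*lam^2 + 4*lam*(F σ - marginal F σ) - ((F σ - marginal F σ)^2 + (inc F σ)^2))
            ≤ psi lam (F σ) := by
          unfold psi
          nlinarith [mul_nonneg hmg (by linarith : (0:ℝ) ≤ 4*lam - 2*F σ + marginal F σ)]
        linarith
      · rw [if_neg hc]
        have hi0 : inc F σ = 0 := hnc σ hm hc
        simp only [hcnt, hchiσ]
        have hind0 : (if (m ≤ σ.length ∧ inc F σ ≠ 0 ∧ ¬ Dead F m lam σ) then (1:ℝ) else 0) = 0 := by
          rw [if_neg]; rintro ⟨-, h, -⟩; exact h hi0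
        rw [hind0]
        have ht := hchi_child true
        have hpsile : psi lam (F (σ ++ [true])) ≤ psi lam (F σ) := by
          rw [hT, hi0]
          unfold psi
          nlinarith [mul_nonneg hmg (by linarith : (0:ℝ) ≤ 4*lam - 2*F σ + marginal F σ)]
        linarith
  intro n hn
  have hchipos : ∀ σ : List Bool, σ.length = n → 0 ≤ chi σ := by
    intro σ hσ
    by_cases hdσ : Dead F m lam σ
    · simp [hchi, hdσ]
    · have hvlam : F σ ≤ lam := not_dead_self hdσ (by omega)
      have hv0 := hF0 σ
      simp only [hchi, if_neg hdσ]
      unfold psi; nlinarith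
  have h1 : En c n (cntF F m lam) ≤ En c n (fun σ => cntF F m lam σ + chi σ) :=
    En_mono c n (fun σ hσ => by linarith [hchipos σ hσ])
  have h2 : En c n (fun σ => cntF F m lam σ + chi σ) ≤
      En c m (fun σ => cntF F m lam σ + chi σ) := En_le_of_tstep c hstep n hn
  have h3 : En c m (fun σ => cntF F m lam σ + chi σ) ≤ En c m (fun _ => 4*lam^2 + 4*lam*d) := by
    refine En_mono c m (fun σ hσ => ?_)
    have hcnt0 : cntF F m lam σ = 0 := by
      unfold cntF
      refine Finset.sum_eq_zero (fun k hk => ?_)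
      rw [if_neg]
      rintro ⟨hk1, -, -⟩
      have := Finset.mem_range.mp hk
      omega
    rw [hcnt0, zero_add]
    by_cases hdσ : Dead F m lam σ
    · simp only [hchi, if_pos hdσ]; nlinarith
    · simp only [hchi, if_neg hdσ]
      have hvd : F σ ≤ d := hd σ hσ
      have hv0 := hF0 σ
      unfold psi; nlinarith
  rw [En_const] at h3
  linarith


/-! ### parameters -/

variable (S : ℕ → List Bool → ℝ)

noncomputable def dOf (mm : ℕ) (j : ℕ) : ℝ := 2 ^ mm * (S j [] + 1)
noncomputable def lamOf (mm : ℕ) (j : ℕ) : ℝ := 2 ^ (j+5) * dOf S mm j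
noncomputable def Tof (mm : ℕ) (j : ℕ) : ℝ :=
  2 ^ (j+5) * (4 * (lamOf S mm j)^2 + 4 * (lamOf S mm j) * (dOf S mm j) + 1)

noncomputable def mrec : ℕ → ℕ × ℝ
  | 0 => (0, Tof S 0 0)
  | j+1 =>
    let p := mrec j
    let m' := 2 ^ (2 * Nat.ceil p.2 + 2*j + 22) + p.1 + 1
    (m', p.2 + Tof S m' (j+1))

noncomputable def mj (j : ℕ) : ℕ := (mrec S j).1
noncomputable def BB (j : ℕ) : ℝ := (mrec S j).2
noncomputable def dj (j : ℕ) : ℝ := dOf S (mj S j) j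
noncomputable def lamj (j : ℕ) : ℝ := lamOf S (mj S j) j
noncomputable def Tj (j : ℕ) : ℝ := Tof S (mj S j) j

lemma mj_zero : mj S 0 = 0 := rfl

lemma mj_succ (j : ℕ) :
    mj S (j+1) = 2 ^ (2 * Nat.ceil (BB S j) + 2*j + 22) + mj S j + 1 := rfl

lemma BB_zero : BB S 0 = Tj S 0 := rfl

lemma BB_succ (j : ℕ) : BB S (j+1) = BB S j + Tj S (j+1) := by
  show (mrec S (j+1)).2 = (mrec S j).2 + Tj S (j+1)
  rfl

lemma BB_eq_sum (j : ℕ) : BB S j = ∑ i ∈ Finset.range (j+1), Tj S i := by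
  induction j with
  | zero => simp [BB_zero]
  | succ j ih => rw [BB_succ, ih, Finset.sum_range_succ (fun i => Tj S i) (j+1)]

lemma mj_strictMono : StrictMono (mj S) := by
  apply strictMono_nat_of_lt_succ
  intro j
  rw [mj_succ]
  have := Nat.one_le_two_pow (n := 2 * Nat.ceil (BB S j) + 2*j + 22)
  omega

lemma mj_ge (j : ℕ) : j ≤ mj S j := (mj_strictMono S).le_apply

lemma dj_ge_one (hpos : ∀ j σ, 0 ≤ S j σ) (j : ℕ) : 1 ≤ dj S j := by
  have h1 : (1:ℝ) ≤ 2 ^ (mj S j) := one_le_pow₀ (by norm_num)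
  have h2 : (1:ℝ) ≤ S j [] + 1 := by linarith [hpos j []]
  calc (1:ℝ) = 1 * 1 := by norm_num
    _ ≤ 2 ^ (mj S j) * (S j [] + 1) := by
        exact mul_le_mul h1 h2 (by norm_num) (by positivity)

lemma lamj_pos (hpos : ∀ j σ, 0 ≤ S j σ) (j : ℕ) : 0 < lamj S j := by
  have := dj_ge_one S hpos j
  have h1 : (0:ℝ) < 2 ^ (j+5) := by positivity
  show (0:ℝ) < 2^(j+5) * dj S j
  nlinarith

lemma dj_le_lamj (hpos : ∀ j σ, 0 ≤ S j σ) (j : ℕ) : dj S j ≤ lamj S j := by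
  have := dj_ge_one S hpos j
  have h1 : (1:ℝ) ≤ 2 ^ (j+5) := one_le_pow₀ (by norm_num)
  show dj S j ≤ 2^(j+5) * dj S j
  nlinarith

lemma Tj_pos (hpos : ∀ j σ, 0 ≤ S j σ) (j : ℕ) : 0 < Tj S j := by
  have h1 := dj_ge_one S hpos j
  have h2 := lamj_pos S hpos j
  have h3 : (0:ℝ) < 2 ^ (j+5) := by positivity
  show (0:ℝ) < 2^(j+5) * (4 * (lamj S j)^2 + 4 * lamj S j * dj S j + 1)
  apply mul_pos h3
  nlinarith

/-! ### the coin predicate, walk and processes -/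

def coinP (σ : List Bool) : Prop := ∃ j, mj S j ≤ σ.length ∧ inc (S j) σ ≠ 0

noncomputable def WF (σ : List Bool) : ℝ :=
  ∑ k ∈ Finset.range σ.length,
    if coinP S (σ.take k) then (if σ.getD k false then (1:ℝ) else -1) / (k+1) else 0

noncomputable def rr (n : ℕ) : ℝ := if n = 0 then 2 else 1 / n

noncomputable def FW (σ : List Bool) : ℝ := (WF S σ)^2 + rr σ.length

lemma rr_nonneg (n : ℕ) : 0 ≤ rr n := by
  unfold rr; split <;> positivity

lemma rr_antitone (n : ℕ) : rr (n+1) ≤ rr n := by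
  unfold rr
  rcases Nat.eq_zero_or_pos n with rfl | hn
  · norm_num
  · rw [if_neg (by omega), if_neg (by omega)]
    have h1 : (0:ℝ) < n := by exact_mod_cast hn
    push_cast
    rw [div_le_div_iff₀ (by linarith) h1]
    nlinarith

lemma rr_step (n : ℕ) : 1 / ((n:ℝ)+1)^2 + rr (n+1) ≤ rr n := by
  unfold rr
  rcases Nat.eq_zero_or_pos n with rfl | hn
  · norm_num
  · rw [if_neg (by omega), if_neg (by omega)]
    have h1 : (0:ℝ) < n := by exact_mod_cast hn
    push_cast
    rw [div_add_div _ _ (by positivity) (by positivity), div_le_div_iff₀ (by positivity) h1]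
    ring_nf
    nlinarith

lemma WF_concat (σ : List Bool) (b : Bool) :
    WF S (σ ++ [b]) = WF S σ +
      (if coinP S σ then (if b then (1:ℝ) else -1) / (σ.length+1) else 0) := by
  unfold WF
  rw [show (σ ++ [b]).length = σ.length + 1 by simp, Finset.sum_range_succ]
  congr 1
  · refine Finset.sum_congr rfl (fun k hk => ?_)
    have hk' : k ≤ σ.length := (Finset.mem_range.mp hk).le
    have hk'' : k < σ.length := Finset.mem_range.mp hk
    rw [take_concat σ b hk', getD_concat hk'']
  · rw [take_concat_self, getD_concat_self]

lemma FW_nil : FW S [] = 2 := by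
  simp [FW, WF, rr]

lemma FW_nonneg (σ : List Bool) : 0 ≤ FW S σ := by
  unfold FW
  have := rr_nonneg σ.length
  positivity

lemma tstep_FW : ∀ σ : List Bool, Tstep (coinP S) (FW S) σ ≤ FW S σ := by
  intro σ
  have hlen : ∀ b : Bool, (σ ++ [b]).length = σ.length + 1 := by intro b; simp
  unfold Tstep
  by_cases hc : coinP S σ
  · rw [if_pos hc]
    have hf : FW S (σ ++ [false]) = (WF S σ + (-1) / (σ.length+1))^2 + rr (σ.length+1) := by
      unfold FW
      rw [WF_concat, if_pos hc, hlen]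
      norm_num
    have ht : FW S (σ ++ [true]) = (WF S σ + 1 / (σ.length+1))^2 + rr (σ.length+1) := by
      unfold FW
      rw [WF_concat, if_pos hc, hlen]
      norm_num
    have hstep := rr_step σ.length
    rw [hf, ht, show FW S σ = (WF S σ)^2 + rr σ.length from rfl]
    have hkey : ((WF S σ + (-1)/((σ.length:ℝ)+1))^2 + rr (σ.length+1)
        + ((WF S σ + 1/((σ.length:ℝ)+1))^2 + rr (σ.length+1)))/2
        = (WF S σ)^2 + 1/((σ.length:ℝ)+1)^2 + rr (σ.length+1) := by
      have : (0:ℝ) < (σ.length:ℝ)+1 := by positivity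
      field_simp
      ring
    rw [hkey]
    linarith
  · rw [if_neg hc]
    unfold FW
    rw [WF_concat, if_neg hc, hlen, add_zero]
    have := rr_antitone σ.length
    linarith

lemma tstep_Sj (hS : ∀ j, IsSupermartingale (S j)) (j : ℕ) :
    ∀ σ : List Bool, mj S j ≤ σ.length → Tstep (coinP S) (S j) σ ≤ S j σ := by
  intro σ hm
  unfold Tstep
  by_cases hc : coinP S σ
  · rw [if_pos hc, avg_children]
    linarith [marginal_nonneg (hS j) σ]
  · rw [if_neg hc]
    have hi0 : inc (S j) σ = 0 := by
      by_contra h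
      exact hc ⟨j, hm, h⟩
    rw [child_true (S j) σ, hi0]
    linarith [marginal_nonneg (hS j) σ]


lemma En_finsum (c : List Bool → Prop) (n : ℕ) (s : Finset ℕ) (h : ℕ → List Bool → ℝ) :
    En c n (fun σ => ∑ j ∈ s, h j σ) = ∑ j ∈ s, En c n (h j) := by
  induction s using Finset.induction with
  | empty => simp [En_const]
  | insert _ _ hx ih =>
    rename_i a s'
    rw [Finset.sum_insert hx, ← ih, ← En_add]
    refine En_congr c n (fun σ _ => ?_)
    rw [Finset.sum_insert hx]

/-! ### the good event -/

def GoodF (σ : List Bool) : Prop :=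
  ¬ Dead (FW S) 0 16 σ ∧
  ∀ j, ¬ Dead (S j) (mj S j) (lamj S j) σ ∧ cntF (S j) (mj S j) (lamj S j) σ ≤ Tj S j

lemma goodF_take {σ : List Bool} (h : GoodF S σ) (K : ℕ) : GoodF S (σ.take K) := by
  obtain ⟨h1, h2⟩ := h
  refine ⟨not_dead_take h1 K, fun j => ⟨not_dead_take (h2 j).1 K, ?_⟩⟩
  exact le_trans (cntF_take _ _ _ σ K) (h2 j).2

lemma auto_good (hS : ∀ j, IsSupermartingale (S j)) (hpos : ∀ j σ, 0 ≤ S j σ)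
    {j : ℕ} {σ : List Bool} (hj : σ.length ≤ mj S j) :
    ¬ Dead (S j) (mj S j) (lamj S j) σ ∧ cntF (S j) (mj S j) (lamj S j) σ ≤ Tj S j := by
  constructor
  · rintro ⟨k, hk1, hk2, hk3⟩
    have hkeq : k = σ.length := by omega
    have hmeq : mj S j = σ.length := by omega
    subst hkeq
    rw [List.take_length] at hk3
    have hb := double_bound (hS j) (hpos j) σ.length σ rfl
    have : S j σ ≤ dj S j := by
      unfold dj dOf
      rw [hmeq]
      exact hb
    linarith [dj_le_lamj S hpos j]
  · have : cntF (S j) (mj S j) (lamj S j) σ = 0 := by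
      unfold cntF
      refine Finset.sum_eq_zero (fun k hk => ?_)
      rw [if_neg]
      rintro ⟨hk1, -, -⟩
      have := Finset.mem_range.mp hk
      omega
    rw [this]
    exact (Tj_pos S hpos j).le

lemma good_node (hS : ∀ j, IsSupermartingale (S j)) (hpos : ∀ j σ, 0 ≤ S j σ)
    (hV : ∀ j σ, inc (S j) σ ≠ 0 → 1 ≤ |inc (S j) σ|) :
    ∀ n, ∃ σ, Reach (coinP S) σ ∧ σ.length = n ∧ GoodF S σ := by
  intro n
  set c := coinP S with hc
  set BadW : List Bool → ℝ := fun σ => if Dead (FW S) 0 16 σ then 1 else 0 with hBadW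
  set BadD : ℕ → List Bool → ℝ :=
    fun j σ => if Dead (S j) (mj S j) (lamj S j) σ then 1 else 0 with hBadD
  set BadC : ℕ → List Bool → ℝ :=
    fun j σ => if cntF (S j) (mj S j) (lamj S j) σ ≤ Tj S j then 0 else 1 with hBadC
  have hpow : ∀ j : ℕ, ((2:ℝ) ^ (j+5))⁻¹ = (1/2)^j * (1/32) := by
    intro j
    rw [pow_add, mul_inv, div_pow, one_pow]
    norm_num
  -- W bound
  have hW : En c n BadW ≤ 1/8 := by
    have hv := ville c (FW S) 0 16 (FW_nonneg S) (by norm_num)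
      (fun σ _ => tstep_FW S σ) 2
      (fun σ hσ => by
        have h0 : σ = [] := List.eq_nil_of_length_eq_zero hσ
        rw [h0, FW_nil])
      (by norm_num) n (Nat.zero_le n)
    calc En c n BadW ≤ 2/16 := hv
      _ = 1/8 := by norm_num
  -- per-j hypotheses
  have hnc : ∀ j, ∀ σ : List Bool, mj S j ≤ σ.length → ¬ c σ → inc (S j) σ = 0 := by
    intro j σ hm hcn
    by_contra h
    exact hcn ⟨j, hm, h⟩
  have hdj1 : ∀ j, (1:ℝ) ≤ dj S j := dj_ge_one S hpos
  have hdd : ∀ j, ∀ σ : List Bool, σ.length = mj S j → S j σ ≤ dj S j := by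
    intro j σ hσ
    have := double_bound (hS j) (hpos j) (mj S j) σ hσ
    exact this
  have hD : ∀ j, En c n (BadD j) ≤ (1/2)^j * (1/32) := by
    intro j
    rcases le_or_gt (mj S j) n with hm | hm
    · have hv := ville c (S j) (mj S j) (lamj S j) (hpos j) (lamj_pos S hpos j)
        (tstep_Sj S hS j) (dj S j) (hdd j) (dj_le_lamj S hpos j) n hm
      have hdl : dj S j / lamj S j = (1/2)^j * (1/32) := by
        rw [show lamj S j = 2^(j+5) * dj S j from rfl]
        rw [mul_comm, div_mul_eq_div_div, div_self (by linarith [hdj1 j])]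
        rw [one_div, hpow j]
      rw [hdl] at hv
      exact hv
    · have hz : En c n (BadD j) ≤ En c n (fun _ => (0:ℝ)) := by
        refine En_mono c n (fun σ hσ => ?_)
        simp only [hBadD]
        rw [if_neg]
        · rintro ⟨k, hk1, hk2, -⟩
          omega
      rw [En_const] at hz
      have : (0:ℝ) ≤ (1/2)^j * (1/32) := by positivity
      linarith
  have hC : ∀ j, En c n (BadC j) ≤ (1/2)^j * (1/32) := by
    intro j
    rcases le_or_gt (mj S j) n with hm | hm
    · have hcb := count_bound c (S j) (mj S j) (lamj S j) (hpos j) (lamj_pos S hpos j)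
        (marginal_nonneg (hS j)) (hV j) (hnc j) (dj S j) (hdd j)
        (by linarith [hdj1 j]) (dj_le_lamj S hpos j) n hm
      have hTpos := Tj_pos S hpos j
      have h1 : En c n (BadC j) ≤ En c n (fun σ => (1 / Tj S j) * cntF (S j) (mj S j) (lamj S j) σ) := by
        refine En_mono c n (fun σ _ => ?_)
        simp only [hBadC]
        split
        · rename_i hle
          have := cntF_nonneg (S j) (mj S j) (lamj S j) σ
          positivity
        · rename_i hgt
          push_neg at hgt
          rw [one_div, ← div_eq_inv_mul, le_div_iff₀ hTpos]
          linarith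
      have h2 : En c n (fun σ => (1 / Tj S j) * cntF (S j) (mj S j) (lamj S j) σ)
          = (1 / Tj S j) * En c n (cntF (S j) (mj S j) (lamj S j)) :=
        En_smul c n _ _
      have h3 : (1 / Tj S j) * En c n (cntF (S j) (mj S j) (lamj S j))
          ≤ (1 / Tj S j) * (4*(lamj S j)^2 + 4*(lamj S j)*(dj S j)) := by
        apply mul_le_mul_of_nonneg_left hcb
        positivity
      have h4 : (1 / Tj S j) * (4*(lamj S j)^2 + 4*(lamj S j)*(dj S j)) ≤ (1/2)^j * (1/32) := by
        rw [← hpow j]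
        have hA : (0:ℝ) ≤ 4*(lamj S j)^2 + 4*(lamj S j)*(dj S j) := by
          have := lamj_pos S hpos j
          have := hdj1 j
          nlinarith
        have h2p : (0:ℝ) < 2^(j+5) := by positivity
        rw [show Tj S j = 2^(j+5) * (4 * (lamj S j)^2 + 4 * (lamj S j) * (dj S j) + 1) from rfl]
        rw [div_mul_eq_mul_div, one_mul, div_le_iff₀ (by nlinarith)]
        rw [← mul_assoc, inv_mul_cancel₀ (ne_of_gt h2p), one_mul]
        linarith
      linarith
    · have hz : En c n (BadC j) ≤ En c n (fun _ => (0:ℝ)) := by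
        refine En_mono c n (fun σ hσ => ?_)
        simp only [hBadC]
        rw [if_pos]
        have hc0 : cntF (S j) (mj S j) (lamj S j) σ = 0 := by
          unfold cntF
          refine Finset.sum_eq_zero (fun k hk => ?_)
          rw [if_neg]
          rintro ⟨hk1, -, -⟩
          have := Finset.mem_range.mp hk
          omega
        rw [hc0]
        exact (Tj_pos S hpos j).le
      rw [En_const] at hz
      have : (0:ℝ) ≤ (1/2)^j * (1/32) := by positivity
      linarith
  -- total bad
  set Bad : List Bool → ℝ := fun σ => BadW σ + ∑ j ∈ Finset.range n, (BadD j σ + BadC j σ)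
    with hBad
  have hBadLe : En c n Bad ≤ 1/4 := by
    have e1 : En c n Bad = En c n BadW +
        ∑ j ∈ Finset.range n, En c n (fun σ => BadD j σ + BadC j σ) := by
      rw [hBad]
      rw [En_add c n BadW (fun σ => ∑ j ∈ Finset.range n, (BadD j σ + BadC j σ))]
      rw [En_finsum c n (Finset.range n) (fun j σ => BadD j σ + BadC j σ)]
    have e2 : ∀ j ∈ Finset.range n, En c n (fun σ => BadD j σ + BadC j σ)
        ≤ (1/2)^j * (1/16) := by
      intro j _
      rw [En_add c n (BadD j) (BadC j)]
      have := hD j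
      have := hC j
      linarith
    have e3 : ∑ j ∈ Finset.range n, En c n (fun σ => BadD j σ + BadC j σ)
        ≤ ∑ j ∈ Finset.range n, (1/2:ℝ)^j * (1/16) := Finset.sum_le_sum e2
    have e4 : ∑ j ∈ Finset.range n, (1/2:ℝ)^j * (1/16)
        = (∑ j ∈ Finset.range n, (1/2:ℝ)^j) * (1/16) := by
      rw [Finset.sum_mul]
    have e5 : (∑ j ∈ Finset.range n, (1/2:ℝ)^j) ≤ 2 := sum_geometric_two_le n
    rw [e1]
    have : (∑ j ∈ Finset.range n, (1/2:ℝ)^j) * (1/16) ≤ 2 * (1/16) := by linarith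
    linarith
  have hgoodpos : 0 < En c n (fun σ => 1 - Bad σ) := by
    rw [show (fun σ : List Bool => 1 - Bad σ) = (fun σ => (fun _ => (1:ℝ)) σ - Bad σ) from rfl]
    rw [En_sub c n (fun _ => (1:ℝ)) Bad, En_const]
    linarith
  obtain ⟨σ, hr, hl, hpos'⟩ := En_pos_exists c n _ hgoodpos
  refine ⟨σ, hr, hl, ?_⟩
  -- extract components
  have hBadW0 : 0 ≤ BadW σ := by simp only [hBadW]; split <;> norm_num
  have hBadD0 : ∀ j, 0 ≤ BadD j σ := by intro j; simp only [hBadD]; split <;> norm_num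
  have hBadC0 : ∀ j, 0 ≤ BadC j σ := by intro j; simp only [hBadC]; split <;> norm_num
  have hsum0 : 0 ≤ ∑ j ∈ Finset.range n, (BadD j σ + BadC j σ) :=
    Finset.sum_nonneg (fun j _ => by linarith [hBadD0 j, hBadC0 j])
  have hBadlt : Bad σ < 1 := by linarith
  have hWσ : ¬ Dead (FW S) 0 16 σ := by
    by_contra hdw
    have : BadW σ = 1 := by simp [hBadW, hdw]
    rw [hBad] at hBadlt
    simp only at hBadlt
    linarith
  refine ⟨hWσ, fun j => ?_⟩
  rcases Nat.lt_or_ge j n with hjn | hjn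
  · have hterm : BadD j σ + BadC j σ ≤ Bad σ := by
      rw [hBad]
      have hs := Finset.single_le_sum (f := fun i => BadD i σ + BadC i σ)
        (fun i _ => add_nonneg (hBadD0 i) (hBadC0 i)) (Finset.mem_range.mpr hjn)
      simp only at hs ⊢
      linarith
    have hterm_lt : BadD j σ + BadC j σ < 1 := lt_of_le_of_lt hterm hBadlt
    constructor
    · by_contra hd
      have h1 : BadD j σ = 1 := by simp [hBadD, hd]
      linarith [hBadC0 j]
    · by_contra hd
      have h1 : BadC j σ = 1 := by simp [hBadC, hd]
      linarith [hBadD0 j]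
  · exact auto_good S hS hpos (by have := mj_ge S j; omega)


/-! ### Koenig extraction -/

def Ext (σ : List Bool) : Prop :=
  ∀ n, ∃ τ, σ <+: τ ∧ τ.length = σ.length + n ∧ Reach (coinP S) τ ∧ GoodF S τ

lemma ext_nil (h : ∀ n, ∃ σ, Reach (coinP S) σ ∧ σ.length = n ∧ GoodF S σ) : Ext S [] := by
  intro n
  obtain ⟨τ, h1, h2, h3⟩ := h n
  exact ⟨τ, List.nil_prefix, by simpa using h2, h1, h3⟩

lemma ext_self {σ : List Bool} (h : Ext S σ) : Reach (coinP S) σ ∧ GoodF S σ := by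
  obtain ⟨τ, hp, hl, hr, hg⟩ := h 0
  have heq : σ = τ := hp.eq_of_length (by omega)
  rw [heq]
  exact ⟨hr, hg⟩

lemma ext_step {σ : List Bool} (h : Ext S σ) : ∃ b, Ext S (σ ++ [b]) := by
  by_contra hcon
  push_neg at hcon
  have key : ∀ b : Bool, ∃ n, ∀ τ, σ ++ [b] <+: τ →
      τ.length = σ.length + 1 + n → Reach (coinP S) τ → ¬ GoodF S τ := by
    intro b
    have hb := hcon b
    unfold Ext at hb
    push_neg at hb
    obtain ⟨n, hn⟩ := hb
    refine ⟨n, fun τ h1 h2 h3 => ?_⟩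
    have := hn τ h1 (by simpa using h2) h3
    exact this
  obtain ⟨nf, hnf⟩ := key false
  obtain ⟨nt, hnt⟩ := key true
  obtain ⟨τ, hp, hl, hr, hg⟩ := h (max nf nt + 1)
  obtain ⟨t, rfl⟩ := hp
  have htlen : t.length = max nf nt + 1 := by
    rw [List.length_append] at hl
    omega
  rcases t with _ | ⟨a, t'⟩
  · simp at htlen
  have htake1 : σ ++ [a] = (σ ++ a :: t').take (σ.length + 1) := by
    rw [show σ.length + 1 = σ.length + (1:ℕ) from rfl, List.take_append]
    simp
  have hcontra : ∀ nb : ℕ, nb ≤ max nf nt →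
      (∀ τ', σ ++ [a] <+: τ' → τ'.length = σ.length + 1 + nb →
        Reach (coinP S) τ' → ¬ GoodF S τ') → False := by
    intro nb hnb hτ
    set cand := (σ ++ a :: t').take (σ.length + 1 + nb) with hcand
    have hle : σ.length + 1 + nb ≤ (σ ++ a :: t').length := by
      rw [List.length_append, List.length_cons]
      have h1 : t'.length + 1 = max nf nt + 1 := by
        simpa using htlen
      omega
    have hlc : cand.length = σ.length + 1 + nb := by
      rw [hcand, List.length_take, Nat.min_eq_left hle]
    have hpre2 : σ ++ [a] <+: cand := by
      have he : σ ++ [a] = cand.take (σ.length + 1) := by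
        rw [hcand, List.take_take, Nat.min_eq_left (by omega), htake1]
      rw [he]
      exact List.take_prefix _ _
    exact hτ cand hpre2 hlc (hr.take _) (goodF_take S hg _)
  cases a
  · exact hcontra nf (le_max_left _ _) hnf
  · exact hcontra nt (le_max_right _ _) hnt

lemma exists_x (hgood : ∀ n, ∃ σ, Reach (coinP S) σ ∧ σ.length = n ∧ GoodF S σ) :
    ∃ x : ℕ → Bool, ∀ n, Reach (coinP S) (pre x n) ∧ GoodF S (pre x n) := by
  have hnil : Ext S [] := ext_nil S hgood
  have hstep : ∀ σ, Ext S σ → ∃ b, Ext S (σ ++ [b]) := fun σ h => ext_step S h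
  choose bf hbf using hstep
  let G : ℕ → Σ' σ : List Bool, Ext S σ :=
    fun n => Nat.rec ⟨[], hnil⟩ (fun _ p => ⟨p.1 ++ [bf p.1 p.2], hbf p.1 p.2⟩) n
  refine ⟨fun n => bf (G n).1 (G n).2, ?_⟩
  have hGpre : ∀ n, pre (fun k => bf (G k).1 (G k).2) n = (G n).1 := by
    intro n
    induction n with
    | zero => rfl
    | succ n ih => rw [pre_succ, ih]
  intro n
  rw [hGpre n]
  exact ext_self S (G n).2

/-! ### the separating martingale -/

noncomputable def Msep (σ : List Bool) : ℝ :=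
  7 + ∑ k ∈ Finset.range σ.length, (if σ.getD k false then (1:ℝ) else -1) / (k+1)

lemma Msep_concat (σ : List Bool) (b : Bool) :
    Msep (σ ++ [b]) = Msep σ + (if b then (1:ℝ) else -1) / (σ.length + 1) := by
  unfold Msep
  rw [show (σ ++ [b]).length = σ.length + 1 by simp, Finset.sum_range_succ]
  rw [getD_concat_self]
  have : ∀ k ∈ Finset.range σ.length,
      (if (σ ++ [b]).getD k false then (1:ℝ) else -1) / (k+1)
      = (if σ.getD k false then (1:ℝ) else -1) / (k+1) := by
    intro k hk
    rw [getD_concat (Finset.mem_range.mp hk)]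
  rw [Finset.sum_congr rfl this]
  ring

lemma inc_Msep (σ : List Bool) : inc Msep σ = 1 / (σ.length + 1) := by
  unfold inc
  rw [Msep_concat σ true, Msep_concat σ false]
  norm_num
  ring

lemma marginal_Msep (σ : List Bool) : marginal Msep σ = 0 := by
  unfold marginal
  rw [Msep_concat σ true, Msep_concat σ false]
  norm_num
  ring

lemma Msep_martingale : IsMartingale Msep := by
  intro σ
  have := marginal_Msep σ
  unfold marginal at this
  linarith

lemma Msep_histindep : HistoryIndependent Msep := by
  intro σ τ h
  rw [inc_Msep, inc_Msep, h]


/-! ### harmonic sums -/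

noncomputable def Hn (N : ℕ) : ℝ := ∑ k ∈ Finset.range N, 1 / ((k:ℝ)+1)

lemma Hn_mono {N M : ℕ} (h : N ≤ M) : Hn N ≤ Hn M := by
  refine Finset.sum_le_sum_of_subset_of_nonneg (Finset.range_subset_range.mpr h) ?_
  intro k _ _
  positivity

lemma Hn_pow (a : ℕ) : (a:ℝ)/2 ≤ Hn (2^a) := by
  induction a with
  | zero => simp [Hn]
  | succ a ih =>
    have hle : (2:ℕ)^a ≤ 2^(a+1) := Nat.pow_le_pow_right (by norm_num) (by omega)
    have hsplit : Hn (2^(a+1)) = Hn (2^a) +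
        ∑ k ∈ Finset.Ico ((2:ℕ)^a) (2^(a+1)), 1/((k:ℝ)+1) := by
      unfold Hn
      rw [Finset.range_eq_Ico,
        ← Finset.sum_Ico_consecutive (fun k => 1/((k:ℝ)+1)) (Nat.zero_le ((2:ℕ)^a)) hle, Finset.range_eq_Ico]
    have hterm : ∀ k ∈ Finset.Ico ((2:ℕ)^a) (2^(a+1)),
        (1:ℝ)/((2:ℝ)^(a+1)) ≤ 1/((k:ℝ)+1) := by
      intro k hk
      obtain ⟨hk1, hk2⟩ := Finset.mem_Ico.mp hk
      have hk3 : ((k:ℝ)+1) ≤ (2:ℝ)^(a+1) := by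
        have h4 : (k:ℕ) + 1 ≤ 2^(a+1) := hk2
        exact_mod_cast h4
      exact one_div_le_one_div_of_le (by positivity) hk3
    have hcard : (Finset.Ico ((2:ℕ)^a) (2^(a+1))).card = 2^a := by
      rw [Nat.card_Ico]
      have h5 : (2:ℕ)^(a+1) = 2^a * 2 := pow_succ 2 a
      omega
    have hsum : ((2:ℝ)^a) * (1/((2:ℝ)^(a+1))) ≤
        ∑ k ∈ Finset.Ico ((2:ℕ)^a) (2^(a+1)), 1/((k:ℝ)+1) := by
      calc ((2:ℝ)^a) * (1/((2:ℝ)^(a+1)))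
          = (Finset.Ico ((2:ℕ)^a) (2^(a+1))).card • ((1:ℝ)/((2:ℝ)^(a+1))) := by
            rw [hcard, nsmul_eq_mul]
            push_cast
            ring
        _ ≤ _ := Finset.card_nsmul_le_sum _ _ _ hterm
    have h2 : ((2:ℝ)^a) * (1/((2:ℝ)^(a+1))) = 1/2 := by
      rw [pow_succ]
      field_simp
    rw [hsplit]
    push_cast
    rw [h2] at hsum
    linarith

/-! ### main lemma -/

lemma main (hS : ∀ j, IsSupermartingale (S j)) (hpos : ∀ j σ, 0 ≤ S j σ)
    (hV : ∀ j, WagersIn (S j) Vset) :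
    ∃ x : ℕ → Bool, AchievesGains Msep x ∧ ∀ j, ∃ C : ℝ, ∀ n, S j (pre x n) ≤ C := by
  have hV' : ∀ j σ, inc (S j) σ ≠ 0 → 1 ≤ |inc (S j) σ| := by
    intro j σ h
    rcases hV j σ with h1 | h1
    · exact h1
    · exact absurd h1 h
  obtain ⟨x, hx⟩ := exists_x S (good_node S hS hpos hV')
  have hxr : ∀ n, Reach (coinP S) (pre x n) := fun n => (hx n).1
  have hxg : ∀ n, GoodF S (pre x n) := fun n => (hx n).2
  -- W bounds
  have hW4 : ∀ n, -4 ≤ WF S (pre x n) ∧ WF S (pre x n) ≤ 4 := by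
    intro n
    have h1 : ¬ Dead (FW S) 0 16 (pre x n) := (hxg n).1
    have h2 : FW S (pre x n) ≤ 16 := not_dead_self h1 (Nat.zero_le _)
    have h3 := rr_nonneg (pre x n).length
    have h4 : (WF S (pre x n))^2 ≤ 16 := by
      unfold FW at h2
      linarith
    constructor <;> nlinarith
  -- decomposition
  set D : ℕ → ℝ :=
    fun n => ∑ k ∈ Finset.range n, (if coinP S (pre x k) then 0 else 1/((k:ℝ)+1)) with hDdef
  have hterm : ∀ n, ∀ k ∈ Finset.range n,
      (if (pre x n).getD k false then (1:ℝ) else -1) / (k+1)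
      = (if coinP S (pre x k) then 0 else 1/((k:ℝ)+1))
        + (if coinP S ((pre x n).take k) then
            (if (pre x n).getD k false then (1:ℝ) else -1)/(k+1) else 0) := by
    intro n k hk
    have hkn : k < n := Finset.mem_range.mp hk
    rw [pre_take x hkn.le, pre_getD x hkn]
    by_cases hcoin : coinP S (pre x k)
    · simp [hcoin]
    · have hxk : x k = true := by
        have hg := Reach.getD_true (hxr n) k (by rw [pre_length]; exact hkn)
          (by rw [pre_take x hkn.le]; exact hcoin)
        rwa [pre_getD x hkn] at hg
      simp [hcoin, hxk]
  have hdecomp : ∀ n, Msep (pre x n) = 7 + D n + WF S (pre x n) := by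
    intro n
    have hsum : ∑ k ∈ Finset.range n, (if (pre x n).getD k false then (1:ℝ) else -1) / (k+1)
        = D n + WF S (pre x n) := by
      unfold WF
      rw [hDdef, pre_length, ← Finset.sum_add_distrib]
      exact Finset.sum_congr rfl (hterm n)
    unfold Msep
    rw [pre_length, hsum]
    ring
  have hD0 : ∀ n, 0 ≤ D n := by
    intro n
    refine Finset.sum_nonneg (fun k _ => ?_)
    split
    · exact le_rfl
    · positivity
  have hMlow : ∀ n, 3 ≤ Msep (pre x n) := by
    intro n
    have := (hW4 n).1
    have := hD0 n
    rw [hdecomp n]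
    linarith
  -- no bankruptcy
  have hnb : ¬ BankruptOn Msep x := by
    rintro ⟨n, hb⟩
    unfold Bankrupts at hb
    rw [inc_Msep, marginal_Msep] at hb
    have h1 : |1 / (((pre x n).length:ℝ) + 1)| ≤ 1 := by
      rw [abs_of_pos (by positivity), div_le_one (by positivity)]
      have : (0:ℝ) ≤ ((pre x n).length:ℝ) := by positivity
      linarith
    have := hMlow n
    linarith
  -- coin count bound
  have hcnt_sum : ∀ n j, cntF (S j) (mj S j) (lamj S j) (pre x n)
      = ∑ k ∈ Finset.range n, (if (mj S j ≤ k ∧ inc (S j) (pre x k) ≠ 0 ∧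
          ¬ Dead (S j) (mj S j) (lamj S j) (pre x k)) then (1:ℝ) else 0) := by
    intro n j
    unfold cntF
    rw [pre_length]
    refine Finset.sum_congr rfl (fun k hk => ?_)
    rw [pre_take x (Finset.mem_range.mp hk).le]
  have hstepA : ∀ n, (∑ k ∈ Finset.range n, if coinP S (pre x k) then (1:ℝ) else 0)
      ≤ ∑ j ∈ Finset.range n, cntF (S j) (mj S j) (lamj S j) (pre x n) := by
    intro n
    have hrhs : ∑ j ∈ Finset.range n, cntF (S j) (mj S j) (lamj S j) (pre x n)
        = ∑ k ∈ Finset.range n, ∑ j ∈ Finset.range n,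
          (if (mj S j ≤ k ∧ inc (S j) (pre x k) ≠ 0 ∧
            ¬ Dead (S j) (mj S j) (lamj S j) (pre x k)) then (1:ℝ) else 0) := by
      rw [← Finset.sum_comm]
      exact Finset.sum_congr rfl (fun j _ => hcnt_sum n j)
    rw [hrhs]
    refine Finset.sum_le_sum (fun k hk => ?_)
    by_cases hcoin : coinP S (pre x k)
    · rw [if_pos hcoin]
      obtain ⟨j, hj1, hj2⟩ := hcoin
      have hjk : j < n := by
        have h1 := mj_ge S j
        have h2 : k < n := Finset.mem_range.mp hk
        rw [pre_length] at hj1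
        omega
      have hnd : ¬ Dead (S j) (mj S j) (lamj S j) (pre x k) := ((hxg k).2 j).1
      have hj1' : mj S j ≤ k := by rwa [pre_length] at hj1
      have hone : (if (mj S j ≤ k ∧ inc (S j) (pre x k) ≠ 0 ∧
          ¬ Dead (S j) (mj S j) (lamj S j) (pre x k)) then (1:ℝ) else 0) = 1 := by
        rw [if_pos ⟨hj1', hj2, hnd⟩]
      calc (1:ℝ) = _ := hone.symm
        _ ≤ _ := Finset.single_le_sum
              (f := fun j => if (mj S j ≤ k ∧ inc (S j) (pre x k) ≠ 0 ∧
                ¬ Dead (S j) (mj S j) (lamj S j) (pre x k)) then (1:ℝ) else 0)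
              (fun i _ => by split <;> norm_num) (Finset.mem_range.mpr hjk)
    · rw [if_neg hcoin]
      refine Finset.sum_nonneg (fun i _ => ?_)
      split <;> norm_num
  have hCC : ∀ J, (∑ k ∈ Finset.range (mj S (J+1)), if coinP S (pre x k) then (1:ℝ) else 0)
      ≤ BB S J := by
    intro J
    set N := mj S (J+1) with hN
    have hJN : J + 1 ≤ N := mj_ge S (J+1)
    have h1 := hstepA N
    have h2 : ∑ j ∈ Finset.range N, cntF (S j) (mj S j) (lamj S j) (pre x N)
        = ∑ j ∈ Finset.range (J+1), cntF (S j) (mj S j) (lamj S j) (pre x N) := by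
      symm
      refine Finset.sum_subset (Finset.range_subset_range.mpr hJN) (fun j hj hnj => ?_)
      have hjJ : J + 1 ≤ j := by
        simp only [Finset.mem_range] at hj hnj
        omega
      have hmjN : N ≤ mj S j := by
        rw [hN]
        exact (mj_strictMono S).monotone hjJ
      rw [hcnt_sum N j]
      refine Finset.sum_eq_zero (fun k hk => ?_)
      rw [if_neg]
      rintro ⟨hk1, -, -⟩
      have := Finset.mem_range.mp hk
      omega
    have h3 : ∑ j ∈ Finset.range (J+1), cntF (S j) (mj S j) (lamj S j) (pre x N)
        ≤ ∑ j ∈ Finset.range (J+1), Tj S j :=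
      Finset.sum_le_sum (fun j _ => ((hxg N).2 j).2)
    rw [BB_eq_sum]
    linarith
  -- D lower bound
  have hDlow : ∀ n, Hn n - (∑ k ∈ Finset.range n, if coinP S (pre x k) then (1:ℝ) else 0)
      ≤ D n := by
    intro n
    rw [hDdef]
    unfold Hn
    rw [← Finset.sum_sub_distrib]
    refine Finset.sum_le_sum (fun k _ => ?_)
    by_cases hcoin : coinP S (pre x k)
    · rw [if_pos hcoin, if_pos hcoin]
      have h1 : 1/((k:ℝ)+1) ≤ 1 := by
        rw [div_le_one (by positivity)]
        have : (0:ℝ) ≤ (k:ℝ) := by positivity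
        linarith
      linarith
    · rw [if_neg hcoin, if_neg hcoin]
      linarith
  have hDck : ∀ J : ℕ, (J:ℝ) ≤ D (mj S (J+1)) := by
    intro J
    set A := 2 * Nat.ceil (BB S J) + 2*J + 22 with hA
    have h2a : 2^A ≤ mj S (J+1) := by
      rw [mj_succ, ← hA]
      omega
    have hHn : ((Nat.ceil (BB S J) : ℝ)) + J + 11 ≤ Hn (mj S (J+1)) := by
      have := Hn_pow A
      have h2 := Hn_mono h2a
      have h3 : ((A:ℕ):ℝ)/2 = (Nat.ceil (BB S J) : ℝ) + J + 11 := by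
        rw [hA]
        push_cast
        ring
      linarith
    have hce : BB S J ≤ (Nat.ceil (BB S J) : ℝ) := Nat.le_ceil _
    have h1 := hCC J
    have h2 := hDlow (mj S (J+1))
    linarith
  have hDmono : ∀ {a b : ℕ}, a ≤ b → D a ≤ D b := by
    intro a b hab
    rw [hDdef]
    refine Finset.sum_le_sum_of_subset_of_nonneg (Finset.range_subset_range.mpr hab) ?_
    intro k _ _
    split
    · exact le_rfl
    · positivity
  have htend : Tendsto (fun n => Msep (pre x n)) atTop atTop := by
    rw [tendsto_atTop]
    intro b
    rw [eventually_atTop]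
    refine ⟨mj S (Nat.ceil b + 1), fun n hn => ?_⟩
    have h1 := hDck (Nat.ceil b)
    have h2 : D (mj S (Nat.ceil b + 1)) ≤ D n := hDmono hn
    have h3 := (hW4 n).1
    have h4 : b ≤ (Nat.ceil b : ℝ) := Nat.le_ceil b
    rw [hdecomp n]
    linarith
  refine ⟨x, ⟨hnb, htend⟩, fun j => ⟨dj S j + lamj S j, fun n => ?_⟩⟩
  rcases le_or_gt n (mj S j) with h | h
  · have hdb := double_bound (hS j) (hpos j) n (pre x n) (pre_length x n)
    have hp2 : (2:ℝ)^n ≤ 2^(mj S j) := by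
      apply pow_le_pow_right₀ (by norm_num) h
    have hp3 : (0:ℝ) ≤ S j [] + 1 := by linarith [hpos j ([] : List Bool)]
    have hd : S j (pre x n) ≤ dj S j := by
      calc S j (pre x n) ≤ 2^n * (S j [] + 1) := hdb
        _ ≤ 2^(mj S j) * (S j [] + 1) := by nlinarith
        _ = dj S j := rfl
    linarith [lamj_pos S hpos j]
  · have h1 : ¬ Dead (S j) (mj S j) (lamj S j) (pre x n) := ((hxg n).2 j).1
    have h2 := not_dead_self h1 (by rw [pre_length]; omega)
    linarith [dj_ge_one S hpos j]

end G13

/-- ({1/n}, ∞-gains) anti-implies (V, ∞-gains): there is a history-independent martingale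
with wagers of the form 1/n that defeats any countable set of nonnegative
V-supermartingales — on some sequence x it tends to infinity without bankruptcy while each
V-supermartingale stays bounded (finite limsup). -/
theorem stmt13 : ∃ M : List Bool → ℝ,
    IsMartingale M ∧ HistoryIndependent M ∧
    (∀ σ, ∃ n : ℕ, inc M σ = 1 / ((n : ℝ) + 1)) ∧
    ∀ S : ℕ → (List Bool → ℝ),
      (∀ j, IsSupermartingale (S j)) →
      (∀ j σ, 0 ≤ S j σ) →
      (∀ j, WagersIn (S j) Vset) →
      ∃ x : ℕ → Bool, AchievesGains M x ∧
        ∀ j, ∃ C : ℝ, ∀ n, S j (pre x n) ≤ C := by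
  refine ⟨G13.Msep, G13.Msep_martingale, G13.Msep_histindep,
    fun σ => ⟨σ.length, ?_⟩, fun S hS hpos hV => G13.main S hS hpos hV⟩
  rw [G13.inc_Msep]
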